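/- For the reduced weakly irreversible n-site phosphorylation network, with N'_n (N_n minus the first three rows), A'_n (A_n minus the first three rows), and E_n the block-diagonal extreme matrix, the determinant over the field ℝ(λ_1,…,λ_{3n}) satisfies det(N'_n · diag(E_nλ) · A'ᵀ_n) = (−1)^n · ∏_{k=0}^{n−1} (λ_{3k+1} + λ_{3k+2})(λ_{3k+1} + λ_{3k+3}) · λ_{3k+1}³. In particular, this determinant is nonzero, so ker(N'_n diag(E_nλ) Aᵀ_n) over ℝ(λ) has dimension 3. -/

import Mathlib

open Matrix

namespace Weakly

variable (K : Type*) [CommRing K]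

/-- `P₁` block (with `5n+3` rows, as used in forming `N_{n+1}`): nonzero rows are
row 1 = (−1,0,1,−1,0,0,0,0), row 2 = (0,0,0,0,−1,0,1,−1) and the last row
= (−1,0,0,0,0,0,1,−1). -/
def P1 (n : ℕ) : Matrix (Fin (5 * n + 3)) (Fin 8) K := fun i j =>
  if (i : ℕ) = 0 then ![(-1 : K), 0, 1, -1, 0, 0, 0, 0] j
  else if (i : ℕ) = 1 then ![(0 : K), 0, 0, 0, -1, 0, 1, -1] j
  else if (i : ℕ) = 5 * n + 2 then ![(-1 : K), 0, 0, 0, 0, 0, 1, -1] j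
  else 0

def P2 : Matrix (Fin 5) (Fin 8) K :=
  !![1, -1, 0, 0, 0, 0, 0, 0;
     0, 1, -1, 1, 0, 0, 0, 0;
     0, 0, 0, 0, 1, -1, 0, 0;
     0, 0, 0, 0, 0, 1, -1, 1;
     0, 0, 1, -1, -1, 0, 0, 0]

/-- Stoichiometric matrices of the reduced weakly irreversible `n`-site
phosphorylation networks: `N_{n+1} = [[N_n, P₁],[0, P₂]]` (and `N_0` is the
empty 3×0 matrix, so that `N_1 = [P₁; P₂]`). -/
def Nmat : (n : ℕ) → Matrix (Fin (5 * n + 3)) (Fin (8 * n)) K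
  | 0 => 0
  | n + 1 =>
      Matrix.reindex (finSumFinEquiv.trans (finCongr (by omega)))
        (finSumFinEquiv.trans (finCongr (by omega)))
        (Matrix.fromBlocks (Nmat n) (P1 K n) 0 (P2 K))

/-- `Q₁` block of the reactant matrix. -/
def Q1 (n : ℕ) : Matrix (Fin (5 * n + 3)) (Fin 8) K := fun i j =>
  if (i : ℕ) = 0 then ![(1 : K), 0, 0, 1, 0, 0, 0, 0] j
  else if (i : ℕ) = 1 then ![(0 : K), 0, 0, 0, 1, 0, 0, 1] j
  else if (i : ℕ) = 5 * n + 2 then ![(1 : K), 0, 0, 0, 0, 0, 0, 1] j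
  else 0

def Q2 : Matrix (Fin 5) (Fin 8) K :=
  !![0, 1, 0, 0, 0, 0, 0, 0;
     0, 0, 1, 0, 0, 0, 0, 0;
     0, 0, 0, 0, 0, 1, 0, 0;
     0, 0, 0, 0, 0, 0, 1, 0;
     0, 0, 0, 1, 1, 0, 0, 0]

/-- Reactant matrices: `A_{n+1} = [[A_n, Q₁],[0, Q₂]]`. -/
def Amat : (n : ℕ) → Matrix (Fin (5 * n + 3)) (Fin (8 * n)) K
  | 0 => 0
  | n + 1 =>
      Matrix.reindex (finSumFinEquiv.trans (finCongr (by omega)))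
        (finSumFinEquiv.trans (finCongr (by omega)))
        (Matrix.fromBlocks (Amat n) (Q1 K n) 0 (Q2 K))

/-- Conservation law matrix `W_n = [Id₃, W̄, …, W̄]` with
`W̄ = [[1,1,0,0,0],[0,0,1,1,0],[1,1,1,1,1]]`. -/
def Wmat (n : ℕ) : Matrix (Fin 3) (Fin (5 * n + 3)) K := fun i j =>
  if (j : ℕ) < 3 then (if (i : ℕ) = (j : ℕ) then 1 else 0)
  else if (i : ℕ) = 2 then 1
  else if (i : ℕ) = 0 then (if ((j : ℕ) - 3) % 5 < 2 then 1 else 0)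
  else (if ((j : ℕ) - 3) % 5 = 2 ∨ ((j : ℕ) - 3) % 5 = 3 then 1 else 0)

/-- The entries of the block `E₁ ∈ ℝ^{8×3}` with columns `(1,1,1,0,1,1,1,0)ᵀ`,
`(0,0,1,1,0,0,0,0)ᵀ` and `(0,0,0,0,0,0,1,1)ᵀ`. -/
def E1entry (ir kr : ℕ) : K :=
  if kr = 0 then (if ir = 3 ∨ ir = 7 then 0 else 1)
  else if kr = 1 then (if ir = 2 ∨ ir = 3 then 1 else 0)
  else (if ir = 6 ∨ ir = 7 then 1 else 0)

/-- Extreme matrix `E_n`: block diagonal with `n` copies of `E₁`. -/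
def Emat (n : ℕ) : Matrix (Fin (8 * n)) (Fin (3 * n)) K := fun i k =>
  if (i : ℕ) / 8 = (k : ℕ) / 3 then E1entry K ((i : ℕ) % 8) ((k : ℕ) % 3) else 0

/-- Columns of `E_n`. -/
def Ecol (n : ℕ) : Fin (3 * n) → Fin (8 * n) → K := fun k i => Emat K n i k

/-- `N'_n`: the stoichiometric matrix with its first three rows removed. -/
def Nmat' (n : ℕ) : Matrix (Fin (5 * n)) (Fin (8 * n)) K :=
  (Nmat K n).submatrix (fun i => (⟨(i : ℕ) + 3, by have := i.isLt; omega⟩ : Fin (5 * n + 3))) id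

/-- `A'_n`: the reactant matrix with its first three rows removed. -/
def Amat' (n : ℕ) : Matrix (Fin (5 * n)) (Fin (8 * n)) K :=
  (Amat K n).submatrix (fun i => (⟨(i : ℕ) + 3, by have := i.isLt; omega⟩ : Fin (5 * n + 3))) id

/-- The square matrix `N'_n · diag(E_n λ) · A'ᵀ_n`. -/
def Csq (n : ℕ) (lam : Fin (3 * n) → K) : Matrix (Fin (5 * n)) (Fin (5 * n)) K :=
  Nmat' K n * Matrix.diagonal ((Emat K n).mulVec lam) * (Amat' K n)ᵀ

/-- The matrix `N'_n · diag(E_n λ) · Aᵀ_n`. -/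
def Galemat (n : ℕ) (lam : Fin (3 * n) → K) : Matrix (Fin (5 * n)) (Fin (5 * n + 3)) K :=
  Nmat' K n * Matrix.diagonal ((Emat K n).mulVec lam) * (Amat K n)ᵀ

end Weakly

open Weakly

namespace WeaklyAux
open Matrix Weakly

variable {K : Type*} [CommRing K]
set_option linter.unusedSectionVars false

def P1' (n : ℕ) : Matrix (Fin (5*n)) (Fin 8) K := fun i j =>
  if (i:ℕ) + 1 = 5*n then ![(-1:K),0,0,0,0,0,1,-1] j else 0

def Q1' (n : ℕ) : Matrix (Fin (5*n)) (Fin 8) K := fun i j =>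
  if (i:ℕ) + 1 = 5*n then ![(1:K),0,0,0,0,0,0,1] j else 0

def e5 (n : ℕ) : Fin (5*n) ⊕ Fin 5 ≃ Fin (5*(n+1)) :=
  finSumFinEquiv.trans (finCongr (by omega))
def e8 (n : ℕ) : Fin (8*n) ⊕ Fin 8 ≃ Fin (8*(n+1)) :=
  finSumFinEquiv.trans (finCongr (by omega))
def e5' (n : ℕ) : Fin (5*n+3) ⊕ Fin 5 ≃ Fin (5*(n+1)+3) :=
  finSumFinEquiv.trans (finCongr (by omega))
def e3 (n : ℕ) : Fin (3*n) ⊕ Fin 3 ≃ Fin (3*(n+1)) :=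
  finSumFinEquiv.trans (finCongr (by omega))

@[simp] lemma e5_val (n : ℕ) (p : Fin (5*n) ⊕ Fin 5) :
    ((e5 n p : Fin (5*(n+1))) : ℕ) = Sum.elim Fin.val (fun r : Fin 5 => 5*n + r) p := by
  rcases p with p|p <;> rfl
@[simp] lemma e8_val (n : ℕ) (p : Fin (8*n) ⊕ Fin 8) :
    ((e8 n p : Fin (8*(n+1))) : ℕ) = Sum.elim Fin.val (fun r : Fin 8 => 8*n + r) p := by
  rcases p with p|p <;> rfl
@[simp] lemma e5'_val (n : ℕ) (p : Fin (5*n+3) ⊕ Fin 5) :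
    ((e5' n p : Fin (5*(n+1)+3)) : ℕ) = Sum.elim Fin.val (fun r : Fin 5 => 5*n+3 + r) p := by
  rcases p with p|p <;> rfl
@[simp] lemma e3_val (n : ℕ) (p : Fin (3*n) ⊕ Fin 3) :
    ((e3 n p : Fin (3*(n+1))) : ℕ) = Sum.elim Fin.val (fun r : Fin 3 => 3*n + r) p := by
  rcases p with p|p <;> rfl

lemma reindex_entry {a b c d e f : ℕ} {M : Matrix (Fin a ⊕ Fin b) (Fin c ⊕ Fin d) K}
    (h : a + b = e) (h' : c + d = f) (p : Fin a ⊕ Fin b) (q : Fin c ⊕ Fin d) :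
    (Matrix.reindex (finSumFinEquiv.trans (finCongr h)) (finSumFinEquiv.trans (finCongr h')) M)
      ((finSumFinEquiv.trans (finCongr h)) p) ((finSumFinEquiv.trans (finCongr h')) q)
      = M p q := by
  simp

lemma Nmat_succ_entry (n : ℕ) (p : Fin (5*n+3) ⊕ Fin 5) (q : Fin (8*n) ⊕ Fin 8) :
    Nmat K (n+1) (e5' n p) (e8 n q) = fromBlocks (Nmat K n) (P1 K n) 0 (P2 K) p q := by
  rw [Nmat]
  exact reindex_entry _ _ p q

lemma Amat_succ_entry (n : ℕ) (p : Fin (5*n+3) ⊕ Fin 5) (q : Fin (8*n) ⊕ Fin 8) :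
    Amat K (n+1) (e5' n p) (e8 n q) = fromBlocks (Amat K n) (Q1 K n) 0 (Q2 K) p q := by
  rw [Amat]
  exact reindex_entry _ _ p q

end WeaklyAux
namespace WeaklyAux
open Matrix Weakly
variable {K : Type*} [CommRing K]
set_option linter.unusedSectionVars false

def shift5 (n : ℕ) : Fin (5*n) → Fin (5*n+3) := fun i => ⟨(i:ℕ)+3, by omega⟩

lemma row_index_eq (n : ℕ) (p : Fin (5*n) ⊕ Fin 5) :
    (⟨((e5 n p : Fin (5*(n+1))) : ℕ)+3, by have := (e5 n p).isLt; omega⟩ : Fin (5*(n+1)+3))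
      = e5' n (Sum.map (shift5 n) id p) := by
  apply Fin.ext
  rcases p with p|p <;> simp only [e5_val, e5'_val, Sum.map_inl, Sum.map_inr, Sum.elim_inl, Sum.elim_inr, shift5, id_eq] <;> omega

lemma Nmat'_succ (n : ℕ) :
    (Nmat' K (n+1)).submatrix (e5 n) (e8 n)
      = fromBlocks (Nmat' K n) (P1' n) 0 (P2 K) := by
  ext p q
  rw [Matrix.submatrix_apply, Nmat', Matrix.submatrix_apply, id_eq]
  rw [show (⟨((e5 n p : Fin (5*(n+1))) : ℕ)+3, by have := (e5 n p).isLt; omega⟩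
      : Fin (5*(n+1)+3)) = e5' n (Sum.map (shift5 n) id p) from row_index_eq n p]
  rw [Nmat_succ_entry]
  rcases p with p|p <;> rcases q with q|q
  · simp only [Sum.map_inl, fromBlocks_apply₁₁, Nmat', Matrix.submatrix_apply, id_eq]
    rfl
  · simp only [Sum.map_inl, fromBlocks_apply₁₂]
    have hp := p.isLt
    rw [P1, P1']
    rcases Nat.eq_or_lt_of_le (Nat.succ_le_of_lt hp) with h | h
    · rw [if_neg (by simp only [shift5]; omega), if_neg (by simp only [shift5]; omega),
        if_pos (by simp only [shift5]; omega), if_pos (by omega)]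
    · rw [if_neg (by simp only [shift5]; omega), if_neg (by simp only [shift5]; omega),
        if_neg (by simp only [shift5]; omega), if_neg (by omega)]
  · simp
  · simp

lemma Amat'_succ (n : ℕ) :
    (Amat' K (n+1)).submatrix (e5 n) (e8 n)
      = fromBlocks (Amat' K n) (Q1' n) 0 (Q2 K) := by
  ext p q
  rw [Matrix.submatrix_apply, Amat', Matrix.submatrix_apply, id_eq]
  rw [show (⟨((e5 n p : Fin (5*(n+1))) : ℕ)+3, by have := (e5 n p).isLt; omega⟩
      : Fin (5*(n+1)+3)) = e5' n (Sum.map (shift5 n) id p) from row_index_eq n p]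
  rw [Amat_succ_entry]
  rcases p with p|p <;> rcases q with q|q
  · simp only [Sum.map_inl, fromBlocks_apply₁₁, Amat', Matrix.submatrix_apply, id_eq]
    rfl
  · simp only [Sum.map_inl, fromBlocks_apply₁₂]
    have hp := p.isLt
    rw [Q1, Q1']
    rcases Nat.eq_or_lt_of_le (Nat.succ_le_of_lt hp) with h | h
    · rw [if_neg (by simp only [shift5]; omega), if_neg (by simp only [shift5]; omega),
        if_pos (by simp only [shift5]; omega), if_pos (by omega)]
    · rw [if_neg (by simp only [shift5]; omega), if_neg (by simp only [shift5]; omega),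
        if_neg (by simp only [shift5]; omega), if_neg (by omega)]
  · simp
  · simp

end WeaklyAux
namespace WeaklyAux
open Matrix Weakly
variable {K : Type*} [CommRing K]
set_option linter.unusedSectionVars false

/-- restriction of `lam` to the first `3n` coordinates -/
def lowlam (n : ℕ) (lam : Fin (3*(n+1)) → K) : Fin (3*n) → K :=
  fun k => lam ⟨(k:ℕ), by have := k.isLt; omega⟩

/-- the three new rate constants -/
def mu (n : ℕ) (lam : Fin (3*(n+1)) → K) : Fin 3 → K :=
  fun s => lam ⟨3*n+(s:ℕ), by have := s.isLt; omega⟩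

/-- the new diagonal block of `diag(E λ)` -/
def d1 (n : ℕ) (lam : Fin (3*(n+1)) → K) : Fin 8 → K := fun r =>
  if (r:ℕ) = 2 then mu n lam 0 + mu n lam 1
  else if (r:ℕ) = 3 then mu n lam 1
  else if (r:ℕ) = 6 then mu n lam 0 + mu n lam 2
  else if (r:ℕ) = 7 then mu n lam 2
  else mu n lam 0

lemma mulVec_split (n : ℕ) (lam : Fin (3*(n+1)) → K) (p : Fin (8*n) ⊕ Fin 8) :
    (Emat K (n+1)).mulVec lam (e8 n p)
      = Sum.elim ((Emat K n).mulVec (lowlam n lam)) (d1 n lam) p := by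
  have expand : (Emat K (n+1)).mulVec lam (e8 n p)
      = ∑ q : Fin (3*n) ⊕ Fin 3, Emat K (n+1) (e8 n p) (e3 n q) * lam (e3 n q) := by
    rw [Matrix.mulVec, dotProduct,
      ← Equiv.sum_comp (e3 n) (fun k => Emat K (n+1) (e8 n p) k * lam k)]
  rw [expand, Fintype.sum_sum_type]
  rcases p with i | r
  · have h2 : ∀ s : Fin 3, Emat K (n+1) (e8 n (Sum.inl i)) (e3 n (Sum.inr s)) = 0 := by
      intro s
      have hi := i.isLt
      simp only [Emat, e8_val, e3_val, Sum.elim_inl, Sum.elim_inr]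
      rw [if_neg (by omega)]
    simp only [h2, zero_mul, Finset.sum_const_zero, add_zero, Sum.elim_inl]
    rw [Matrix.mulVec, dotProduct]
    apply Finset.sum_congr rfl
    intro k _
    have hcol : e3 n (Sum.inl k) = (⟨(k:ℕ), by have := k.isLt; omega⟩ : Fin (3*(n+1))) :=
      Fin.ext (by simp)
    rw [hcol]
    simp only [Emat, e8_val, e3_val, Sum.elim_inl, lowlam]
  · have h1 : ∀ k : Fin (3*n), Emat K (n+1) (e8 n (Sum.inr r)) (e3 n (Sum.inl k)) = 0 := by
      intro k
      have hk := k.isLt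
      have hr := r.isLt
      simp only [Emat, e8_val, e3_val, Sum.elim_inl, Sum.elim_inr]
      rw [if_neg (by omega)]
    simp only [h1, zero_mul, Finset.sum_const_zero, zero_add, Sum.elim_inr]
    have hterm : ∀ s : Fin 3, Emat K (n+1) (e8 n (Sum.inr r)) (e3 n (Sum.inr s)) * lam (e3 n (Sum.inr s))
        = E1entry K (r:ℕ) (s:ℕ) * mu n lam s := by
      intro s
      have hr := r.isLt
      have hs := s.isLt
      have hcol : e3 n (Sum.inr s) = (⟨3*n+(s:ℕ), by omega⟩ : Fin (3*(n+1))) :=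
        Fin.ext (by simp)
      rw [hcol]
      simp only [Emat, e8_val, e3_val, Sum.elim_inr, mu]
      rw [if_pos (by omega)]
      congr 2 <;> omega
    rw [Finset.sum_congr rfl (fun s _ => hterm s)]
    have hr := r.isLt
    rw [Fin.sum_univ_three]
    fin_cases r <;> simp [d1, E1entry, mu, Fin.sum_univ_three] <;> ring

end WeaklyAux
namespace WeaklyAux
open Matrix Weakly
variable {K : Type*} [CommRing K]
set_option linter.unusedSectionVars false
set_option maxHeartbeats 1000000

lemma diag_split (n : ℕ) (lam : Fin (3*(n+1)) → K) :
    (Matrix.diagonal ((Emat K (n+1)).mulVec lam)).submatrix (e8 n) (e8 n)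
      = fromBlocks (Matrix.diagonal ((Emat K n).mulVec (lowlam n lam))) 0 0
          (Matrix.diagonal (d1 n lam)) := by
  rw [Matrix.submatrix_diagonal _ _ (e8 n).injective]
  rw [show ((Emat K (n+1)).mulVec lam) ∘ (e8 n)
      = Sum.elim ((Emat K n).mulVec (lowlam n lam)) (d1 n lam) from
      funext fun p => mulVec_split n lam p]
  exact (Matrix.fromBlocks_diagonal _ _).symm

lemma Zmat_eq (n : ℕ) (lam : Fin (3*(n+1)) → K) :
    P2 K * Matrix.diagonal (d1 n lam) * (Q2 K)ᵀ
      = !![-(mu n lam 0), 0, 0, 0, 0;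
           mu n lam 0, -(mu n lam 0 + mu n lam 1), 0, 0, mu n lam 1;
           0, 0, -(mu n lam 0), 0, mu n lam 0;
           0, 0, mu n lam 0, -(mu n lam 0 + mu n lam 2), 0;
           0, mu n lam 0 + mu n lam 1, 0, 0, -(mu n lam 0 + mu n lam 1)] := by
  ext s j
  rw [Matrix.mul_apply]
  simp only [Matrix.mul_diagonal, Matrix.transpose_apply, Fin.sum_univ_succ,
    Finset.sum_const, Fin.sum_univ_zero]
  fin_cases s <;> fin_cases j <;>
    simp [P2, Q2, d1, mu, Matrix.vecHead, Matrix.vecTail, Function.comp] <;> ring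

end WeaklyAux
namespace WeaklyAux
open Matrix Weakly
variable {K : Type*} [CommRing K]
set_option linter.unusedSectionVars false
set_option maxHeartbeats 1000000

lemma detZ (n : ℕ) (lam : Fin (3*(n+1)) → K) :
    (P2 K * Matrix.diagonal (d1 n lam) * (Q2 K)ᵀ).det
      = -((mu n lam 0 + mu n lam 1) * (mu n lam 0 + mu n lam 2) * mu n lam 0 ^ 3) := by
  rw [Zmat_eq]
  simp [Matrix.det_succ_row_zero, Fin.sum_univ_succ, Fin.succAbove,
    Fin.castSucc, Fin.castAdd, Fin.castLE, Matrix.vecHead, Matrix.vecTail]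
  ring

lemma corr_eq (n : ℕ) (lam : Fin (3*(n+1)) → K) :
    P1' (K := K) n * Matrix.diagonal (d1 n lam) * (Q1' (K := K) n)ᵀ
      = Matrix.of fun (i j : Fin (5*n)) => if (i:ℕ)+1 = 5*n ∧ (j:ℕ)+1 = 5*n then -(mu n lam 0 + mu n lam 2) else 0 := by
  ext i j
  rw [Matrix.mul_apply]
  simp only [Matrix.mul_diagonal, Matrix.transpose_apply, P1', Q1']
  by_cases hi : (i:ℕ)+1 = 5*n <;> by_cases hj : (j:ℕ)+1 = 5*n <;>
    simp [hi, hj, Fin.sum_univ_succ, d1, mu] <;> ring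

lemma Bmat_eq (n : ℕ) (lam : Fin (3*(n+1)) → K) :
    P1' (K := K) n * Matrix.diagonal (d1 n lam) * (Q2 K)ᵀ
      = Matrix.of fun (i : Fin (5*n)) (j : Fin 5) => if (i:ℕ)+1 = 5*n
          then (![0,0,0,mu n lam 0 + mu n lam 2,0] : Fin 5 → K) j else 0 := by
  ext i j
  rw [Matrix.mul_apply]
  simp only [Matrix.mul_diagonal, Matrix.transpose_apply, P1']
  by_cases hi : (i:ℕ)+1 = 5*n <;>
    [skip; simp [hi]]
  fin_cases j <;> simp [hi, Fin.sum_univ_succ, d1, mu, Q2,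
    Matrix.vecHead, Matrix.vecTail, Function.comp] <;> ring

lemma Cmat_eq (n : ℕ) (lam : Fin (3*(n+1)) → K) :
    P2 K * Matrix.diagonal (d1 n lam) * (Q1' (K := K) n)ᵀ
      = Matrix.of fun (s : Fin 5) (j : Fin (5*n)) => if (j:ℕ)+1 = 5*n
          then (![mu n lam 0,0,0,mu n lam 2,0] : Fin 5 → K) s else 0 := by
  ext s j
  rw [Matrix.mul_apply]
  simp only [Matrix.mul_diagonal, Matrix.transpose_apply, Q1']
  by_cases hj : (j:ℕ)+1 = 5*n <;>
    [skip; simp [hj]]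
  fin_cases s <;> simp [hj, Fin.sum_univ_succ, d1, mu, P2,
    Matrix.vecHead, Matrix.vecTail, Function.comp] <;> ring

end WeaklyAux
namespace WeaklyAux
open Matrix Weakly
variable {K : Type*} [CommRing K]
set_option linter.unusedSectionVars false
set_option maxHeartbeats 1000000

/-- the elimination block -/
def Umat (n : ℕ) : Matrix (Fin (5*n)) (Fin 5) K :=
  Matrix.of fun i _ => if (i:ℕ)+1 = 5*n then 1 else 0

lemma Csq_block (n : ℕ) (lam : Fin (3*(n+1)) → K) :
    (Csq K (n+1) lam).submatrix (e5 n) (e5 n)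
      = fromBlocks
          (Csq K n (lowlam n lam) + P1' (K := K) n * Matrix.diagonal (d1 n lam) * (Q1' (K := K) n)ᵀ)
          (P1' (K := K) n * Matrix.diagonal (d1 n lam) * (Q2 K)ᵀ)
          (P2 K * Matrix.diagonal (d1 n lam) * (Q1' (K := K) n)ᵀ)
          (P2 K * Matrix.diagonal (d1 n lam) * (Q2 K)ᵀ) := by
  rw [Csq]
  rw [Matrix.submatrix_mul _ _ (e5 n) (e8 n) (e5 n) (e8 n).bijective]
  rw [Matrix.submatrix_mul _ _ (e5 n) (e8 n) (e8 n) (e8 n).bijective]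
  rw [show (Amat' K (n+1))ᵀ.submatrix (⇑(e8 n)) (⇑(e5 n))
      = ((Amat' K (n+1)).submatrix (e5 n) (e8 n))ᵀ from rfl]
  rw [Nmat'_succ, Amat'_succ, diag_split]
  rw [Matrix.fromBlocks_transpose, Matrix.fromBlocks_multiply, Matrix.fromBlocks_multiply]
  rw [Csq]
  simp only [Matrix.mul_zero, Matrix.zero_mul, add_zero, zero_add, Matrix.transpose_zero]

lemma det_step (n : ℕ) (lam : Fin (3*(n+1)) → K) :
    (Csq K (n+1) lam).det = (Csq K n (lowlam n lam)).det *
      (-((mu n lam 0 + mu n lam 1) * (mu n lam 0 + mu n lam 2) * mu n lam 0 ^ 3)) := by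
  have hdet : (Csq K (n+1) lam).det
      = (fromBlocks
          (Csq K n (lowlam n lam) + P1' (K := K) n * Matrix.diagonal (d1 n lam) * (Q1' (K := K) n)ᵀ)
          (P1' (K := K) n * Matrix.diagonal (d1 n lam) * (Q2 K)ᵀ)
          (P2 K * Matrix.diagonal (d1 n lam) * (Q1' (K := K) n)ᵀ)
          (P2 K * Matrix.diagonal (d1 n lam) * (Q2 K)ᵀ)).det := by
    rw [← Csq_block, Matrix.det_submatrix_equiv_self]
  have hUC : (P1' (K := K) n * Matrix.diagonal (d1 n lam) * (Q1' (K := K) n)ᵀ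
        + Umat (K := K) n * (P2 K * Matrix.diagonal (d1 n lam) * (Q1' (K := K) n)ᵀ)
      : Matrix (Fin (5*n)) (Fin (5*n)) K) = 0 := by
    rw [Cmat_eq, corr_eq]
    ext i j
    rw [Matrix.add_apply, Matrix.mul_apply, Fin.sum_univ_succ, Fin.sum_univ_succ,
      Fin.sum_univ_succ, Fin.sum_univ_succ, Fin.sum_univ_succ, Fin.sum_univ_zero]
    by_cases hi : (i:ℕ)+1 = 5*n <;> by_cases hj : (j:ℕ)+1 = 5*n <;>
      simp [Umat, hi, hj] <;> ring
  have hUZ : ((P1' (K := K) n * Matrix.diagonal (d1 n lam) * (Q2 K)ᵀ)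
        + Umat (K := K) n * (P2 K * Matrix.diagonal (d1 n lam) * (Q2 K)ᵀ)
      : Matrix (Fin (5*n)) (Fin 5) K) = 0 := by
    rw [Bmat_eq, Zmat_eq]
    ext i j
    rw [Matrix.add_apply, Matrix.mul_apply, Fin.sum_univ_succ, Fin.sum_univ_succ,
      Fin.sum_univ_succ, Fin.sum_univ_succ, Fin.sum_univ_succ, Fin.sum_univ_zero]
    by_cases hi : (i:ℕ)+1 = 5*n <;> fin_cases j <;>
      simp [Umat, hi, Matrix.vecHead, Matrix.vecTail] <;> ring
  have hT : fromBlocks (1 : Matrix (Fin (5*n)) (Fin (5*n)) K) (Umat n) 0 1 *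
      fromBlocks
          (Csq K n (lowlam n lam) + P1' (K := K) n * Matrix.diagonal (d1 n lam) * (Q1' (K := K) n)ᵀ)
          (P1' (K := K) n * Matrix.diagonal (d1 n lam) * (Q2 K)ᵀ)
          (P2 K * Matrix.diagonal (d1 n lam) * (Q1' (K := K) n)ᵀ)
          (P2 K * Matrix.diagonal (d1 n lam) * (Q2 K)ᵀ)
      = fromBlocks (Csq K n (lowlam n lam)) 0
          (P2 K * Matrix.diagonal (d1 n lam) * (Q1' (K := K) n)ᵀ)
          (P2 K * Matrix.diagonal (d1 n lam) * (Q2 K)ᵀ) := by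
    rw [Matrix.fromBlocks_multiply]
    simp only [Matrix.one_mul, Matrix.zero_mul, zero_add]
    rw [add_assoc, hUC, add_zero, hUZ]
  have hdetT : (fromBlocks (1 : Matrix (Fin (5*n)) (Fin (5*n)) K) (Umat n) 0 1).det = 1 := by
    rw [Matrix.det_fromBlocks_zero₂₁, Matrix.det_one, Matrix.det_one, mul_one]
  have hmul := Matrix.det_mul
    (fromBlocks (1 : Matrix (Fin (5*n)) (Fin (5*n)) K) (Umat n) 0 1)
    (fromBlocks
          (Csq K n (lowlam n lam) + P1' (K := K) n * Matrix.diagonal (d1 n lam) * (Q1' (K := K) n)ᵀ)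
          (P1' (K := K) n * Matrix.diagonal (d1 n lam) * (Q2 K)ᵀ)
          (P2 K * Matrix.diagonal (d1 n lam) * (Q1' (K := K) n)ᵀ)
          (P2 K * Matrix.diagonal (d1 n lam) * (Q2 K)ᵀ))
  rw [hT, hdetT, one_mul, Matrix.det_fromBlocks_zero₁₂] at hmul
  rw [hdet, ← hmul, detZ]

end WeaklyAux
namespace WeaklyAux
open Matrix Weakly
variable {K : Type*} [CommRing K]
set_option linter.unusedSectionVars false
set_option maxHeartbeats 1000000

theorem det_formula (n : ℕ) (lam : Fin (3 * n) → K) :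
    (Csq K n lam).det
        = (-1 : K) ^ n *
          ∏ k : Fin n,
            ((lam ⟨3 * (k : ℕ), by have hk := Nat.succ_le_of_lt k.isLt; omega⟩
                + lam ⟨3 * (k : ℕ) + 1, by have hk := Nat.succ_le_of_lt k.isLt; omega⟩) *
              (lam ⟨3 * (k : ℕ), by have hk := Nat.succ_le_of_lt k.isLt; omega⟩
                + lam ⟨3 * (k : ℕ) + 2, by have hk := Nat.succ_le_of_lt k.isLt; omega⟩) *
              lam ⟨3 * (k : ℕ), by have hk := Nat.succ_le_of_lt k.isLt; omega⟩ ^ 3) := by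
  induction n with
  | zero =>
      haveI : IsEmpty (Fin (5 * 0)) := inferInstanceAs (IsEmpty (Fin 0))
      rw [Matrix.det_isEmpty]
      simp
  | succ n ih =>
      rw [det_step, ih (lowlam n lam), Fin.prod_univ_castSucc]
      have hP : ∀ k : Fin n,
          ((lowlam n lam ⟨3 * (k : ℕ), by have := k.isLt; omega⟩
              + lowlam n lam ⟨3 * (k : ℕ) + 1, by have := k.isLt; omega⟩) *
            (lowlam n lam ⟨3 * (k : ℕ), by have := k.isLt; omega⟩
              + lowlam n lam ⟨3 * (k : ℕ) + 2, by have := k.isLt; omega⟩) *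
            lowlam n lam ⟨3 * (k : ℕ), by have := k.isLt; omega⟩ ^ 3)
          = ((lam ⟨3 * ((Fin.castSucc k : Fin (n+1)) : ℕ), by have := k.isLt; omega⟩
              + lam ⟨3 * ((Fin.castSucc k : Fin (n+1)) : ℕ) + 1, by have := k.isLt; omega⟩) *
            (lam ⟨3 * ((Fin.castSucc k : Fin (n+1)) : ℕ), by have := k.isLt; omega⟩
              + lam ⟨3 * ((Fin.castSucc k : Fin (n+1)) : ℕ) + 2, by have := k.isLt; omega⟩) *
            lam ⟨3 * ((Fin.castSucc k : Fin (n+1)) : ℕ), by have := k.isLt; omega⟩ ^ 3) := by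
        intro k
        simp only [lowlam, Fin.coe_castSucc]
      rw [Finset.prod_congr rfl (fun k _ => hP k)]
      have hlast : (-((mu n lam 0 + mu n lam 1) * (mu n lam 0 + mu n lam 2) * mu n lam 0 ^ 3))
          = -(((lam ⟨3 * ((Fin.last n : Fin (n+1)) : ℕ), by omega⟩
              + lam ⟨3 * ((Fin.last n : Fin (n+1)) : ℕ) + 1, by omega⟩) *
            (lam ⟨3 * ((Fin.last n : Fin (n+1)) : ℕ), by omega⟩
              + lam ⟨3 * ((Fin.last n : Fin (n+1)) : ℕ) + 2, by omega⟩) *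
            lam ⟨3 * ((Fin.last n : Fin (n+1)) : ℕ), by omega⟩ ^ 3)) := by
        have h0 : mu n lam 0 = lam ⟨3 * ((Fin.last n : Fin (n+1)) : ℕ), by omega⟩ := by
          unfold mu; congr 1
        have h1 : mu n lam 1 = lam ⟨3 * ((Fin.last n : Fin (n+1)) : ℕ) + 1, by omega⟩ := by
          unfold mu; congr 1
        have h2 : mu n lam 2 = lam ⟨3 * ((Fin.last n : Fin (n+1)) : ℕ) + 2, by omega⟩ := by
          unfold mu; congr 1
        rw [h0, h1, h2]
      rw [hlast]
      ring
end WeaklyAux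
namespace WeaklyAux
open Matrix Weakly
set_option linter.unusedSectionVars false
set_option maxHeartbeats 1000000

variable {K : Type*} [Field K]

/-- column-selection matrix -/
def sel (n : ℕ) : Matrix (Fin (5*n+3)) (Fin (5*n)) K :=
  Matrix.of fun m j => if (m:ℕ) = (j:ℕ)+3 then 1 else 0

lemma csq_eq_gale_mul (n : ℕ) (lam : Fin (3*n) → K) :
    Csq K n lam = Galemat K n lam * sel (K := K) n := by
  ext i j
  rw [Matrix.mul_apply]
  rw [Finset.sum_eq_single (⟨(j:ℕ)+3, by have := j.isLt; omega⟩ : Fin (5*n+3))]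
  · have h1 : (sel n : Matrix (Fin (5*n+3)) (Fin (5*n)) K)
        (⟨(j:ℕ)+3, by have := j.isLt; omega⟩ : Fin (5*n+3)) j = 1 := by simp [sel]
    rw [h1, mul_one]
    rfl
  · intro b _ hb
    have h0 : (sel n : Matrix (Fin (5*n+3)) (Fin (5*n)) K) b j = 0 := by
      simp only [sel, Matrix.of_apply, ite_eq_right_iff]
      intro hh
      exact absurd (Fin.ext hh) hb
    rw [h0, mul_zero]
  · intro h
    exact absurd (Finset.mem_univ _) h

lemma rank_gale (n : ℕ) (lam : Fin (3*n) → K)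
    (hdet : (Csq K n lam).det ≠ 0) :
    (Galemat K n lam).rank = 5*n := by
  have h1 : (Csq K n lam).rank = 5*n := by
    rw [Matrix.rank_of_isUnit _ ((Matrix.isUnit_iff_isUnit_det _).mpr (isUnit_iff_ne_zero.mpr hdet))]
    simp
  have h2 : (Csq K n lam).rank ≤ (Galemat K n lam).rank := by
    rw [csq_eq_gale_mul]
    exact Matrix.rank_mul_le_left _ _
  have h3 : (Galemat K n lam).rank ≤ 5*n := by
    have := Matrix.rank_le_card_height (Galemat K n lam)
    simpa using this
  omega

lemma ker_gale (n : ℕ) (lam : Fin (3*n) → K)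
    (hdet : (Csq K n lam).det ≠ 0) :
    Module.finrank K (LinearMap.ker (Galemat K n lam).mulVecLin) = 3 := by
  have hrn := LinearMap.finrank_range_add_finrank_ker (Galemat K n lam).mulVecLin
  have hdom : Module.finrank K (Fin (5*n+3) → K) = 5*n+3 := by
    simp [Module.finrank_pi]
  have hr : Module.finrank K (LinearMap.range (Galemat K n lam).mulVecLin) = 5*n :=
    rank_gale n lam hdet
  omega

end WeaklyAux

/-- for the reduced weakly irreversible `n`-site network, over any
field `K` (in particular `ℝ(λ)`),
`det(N'_n diag(E_n λ) A'ᵀ_n) = (−1)^n ∏_{k=0}^{n−1} (λ_{3k+1}+λ_{3k+2})(λ_{3k+1}+λ_{3k+3}) λ_{3k+1}³`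
(0-based: `λ_{3k+1}` is `lam ⟨3k⟩`).  When all these factors are nonzero, the
kernel of `N'_n diag(E_n λ) Aᵀ_n` has dimension 3. -/
theorem stmt18 (K : Type*) [Field K] (n : ℕ) (lam : Fin (3 * n) → K) :
    (Csq K n lam).det
        = (-1 : K) ^ n *
          ∏ k : Fin n,
            ((lam ⟨3 * (k : ℕ), by have := k.isLt; omega⟩
                + lam ⟨3 * (k : ℕ) + 1, by have := k.isLt; omega⟩) *
              (lam ⟨3 * (k : ℕ), by have := k.isLt; omega⟩
                + lam ⟨3 * (k : ℕ) + 2, by have := k.isLt; omega⟩) *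
              lam ⟨3 * (k : ℕ), by have := k.isLt; omega⟩ ^ 3) ∧
    ((∀ k : Fin n,
        lam ⟨3 * (k : ℕ), by have := k.isLt; omega⟩ ≠ 0 ∧
        lam ⟨3 * (k : ℕ), by have := k.isLt; omega⟩
            + lam ⟨3 * (k : ℕ) + 1, by have := k.isLt; omega⟩ ≠ 0 ∧
        lam ⟨3 * (k : ℕ), by have := k.isLt; omega⟩
            + lam ⟨3 * (k : ℕ) + 2, by have := k.isLt; omega⟩ ≠ 0) →
      Module.finrank K (LinearMap.ker (Galemat K n lam).mulVecLin) = 3) := by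
  refine ⟨WeaklyAux.det_formula n lam, fun h => ?_⟩
  apply WeaklyAux.ker_gale
  rw [WeaklyAux.det_formula]
  apply mul_ne_zero
  · exact pow_ne_zero _ (neg_ne_zero.mpr one_ne_zero)
  · rw [Finset.prod_ne_zero_iff]
    intro k _
    obtain ⟨h1, h2, h3⟩ := h k
    exact mul_ne_zero (mul_ne_zero h2 h3) (pow_ne_zero _ h1)
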